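/- Let q > 2 be a natural number. Among all quadruples (a,b,c,d) of integers with 0 ≤ a,b,c,d ≤ 2q−1, the number of quadruples satisfying a − b − c + d ≡ 0 (mod 2q) equals 8q³, and the number of quadruples satisfying both a − b − c + d ≡ 0 (mod 2q) and ⌊a/2⌋ − ⌊b/2⌋ − ⌊c/2⌋ + ⌊d/2⌋ ≡ 0 (mod q) equals 6q³. Consequently, a uniformly random exponent chain that forms a cycle for circulant size 2q forms a cycle after floor lifting with probability 3/4. -/

import Mathlib

/-- The finite set of exponent chains of length 4 for circulant size `2q`:
quadruples `(a,b,c,d)` of integers with `0 ≤ a,b,c,d ≤ 2q-1`. -/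
noncomputable abbrev expChains (q : ℕ) : Finset (ℤ × ℤ × ℤ × ℤ) :=
  Finset.Icc (0:ℤ) (2 * q - 1) ×ˢ Finset.Icc (0:ℤ) (2 * q - 1) ×ˢ
    Finset.Icc (0:ℤ) (2 * q - 1) ×ˢ Finset.Icc (0:ℤ) (2 * q - 1)

/-- The chain forms a cycle for circulant size `2q`. -/
abbrev isCycle (q : ℕ) (x : ℤ × ℤ × ℤ × ℤ) : Prop :=
  (x.1 - x.2.1 - x.2.2.1 + x.2.2.2) % (2 * q) = 0

/-- The floor-lifted chain (entries `⌊e/2⌋`) forms a cycle for circulant size `q`. -/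
abbrev isFloorCycle (q : ℕ) (x : ℤ × ℤ × ℤ × ℤ) : Prop :=
  (x.1 / 2 - x.2.1 / 2 - x.2.2.1 / 2 + x.2.2.2 / 2) % q = 0

lemma mod_unique {m a t : ℤ} (h0 : 0 ≤ a) (h1 : a < m) (h : (a - t) % m = 0) :
    a = t % m := by
  have h2 : a % m = t % m := Int.emod_eq_emod_iff_emod_sub_eq_zero.mpr h
  rw [← h2, Int.emod_eq_of_lt h0 h1]

lemma count1 (q : ℕ) (hq : 0 < q) :
    ((expChains q).filter (fun x => isCycle q x)).card = 8 * q ^ 3 := by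
  have hm : (0:ℤ) < 2 * q := by positivity
  have key : ((expChains q).filter (fun x => isCycle q x)).card
      = ((Finset.Icc (0:ℤ) (2*q-1)) ×ˢ (Finset.Icc (0:ℤ) (2*q-1)) ×ˢ
          (Finset.Icc (0:ℤ) (2*q-1))).card := by
    apply Finset.card_bij (fun x _ => (x.2.1, x.2.2.1, x.2.2.2))
    · rintro ⟨a, b, c, d⟩ ha
      simp only [Finset.mem_filter, Finset.mem_product, Finset.mem_Icc] at ha ⊢
      tauto
    · rintro ⟨a₁, b₁, c₁, d₁⟩ h₁ ⟨a₂, b₂, c₂, d₂⟩ h₂ he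
      simp only [Finset.mem_filter, Finset.mem_product, Finset.mem_Icc, isCycle] at h₁ h₂
      simp only [Prod.mk.injEq] at he
      obtain ⟨hb, hc, hd⟩ := he
      subst hb; subst hc; subst hd
      have e1 : a₁ = (b₁ + c₁ - d₁) % (2*q) := by
        apply mod_unique h₁.1.1.1 (by linarith [h₁.1.1.2])
        have : a₁ - (b₁ + c₁ - d₁) = a₁ - b₁ - c₁ + d₁ := by ring
        rw [this]; exact h₁.2
      have e2 : a₂ = (b₁ + c₁ - d₁) % (2*q) := by
        apply mod_unique h₂.1.1.1 (by linarith [h₂.1.1.2])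
        have : a₂ - (b₁ + c₁ - d₁) = a₂ - b₁ - c₁ + d₁ := by ring
        rw [this]; exact h₂.2
      simp [Prod.ext_iff]; omega
    · rintro ⟨b, c, d⟩ hb
      simp only [Finset.mem_product, Finset.mem_Icc] at hb
      refine ⟨((b + c - d) % (2*q), b, c, d), ?_, rfl⟩
      simp only [Finset.mem_filter, Finset.mem_product, Finset.mem_Icc, isCycle]
      refine ⟨⟨⟨Int.emod_nonneg _ (by positivity), by
        have := Int.emod_lt_of_pos (b + c - d) hm; linarith⟩, hb.1, hb.2.1, hb.2.2⟩, ?_⟩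
      have h1 : (b + c - d) % (2*q) - b - c + d
          = (2*q) * (-((b + c - d) / (2*q))) := by
        rw [Int.emod_def]; ring
      rw [h1]; exact Int.mul_emod_right _ _
  rw [key]
  simp only [Finset.card_product, Int.card_Icc]
  have h2 : ((2*(q:ℤ) - 1 + 1 - 0).toNat) = 2 * q := by omega
  rw [h2]; ring

lemma count2 (q : ℕ) (hq : 2 < q) :
    ((expChains q).filter (fun x => isCycle q x ∧ isFloorCycle q x)).card = 6 * q ^ 3 := by
  have hq0 : (0:ℤ) < q := by exact_mod_cast Nat.pos_of_ne_zero (by omega)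
  set P : Finset (ℤ × ℤ × ℤ × ℤ) :=
    {(0,0,0,0), (1,1,1,1), (1,1,0,0), (1,0,1,0), (0,1,0,1), (0,0,1,1)} with hP
  have memP : ∀ p : ℤ × ℤ × ℤ × ℤ, p ∈ P ↔
      (0 ≤ p.1 ∧ p.1 ≤ 1 ∧ 0 ≤ p.2.1 ∧ p.2.1 ≤ 1 ∧ 0 ≤ p.2.2.1 ∧ p.2.2.1 ≤ 1 ∧
        0 ≤ p.2.2.2 ∧ p.2.2.2 ≤ 1 ∧ p.1 - p.2.1 - p.2.2.1 + p.2.2.2 = 0) := by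
    rintro ⟨pa, pb, pc, pd⟩
    simp only [hP, Finset.mem_insert, Finset.mem_singleton, Prod.mk.injEq]
    omega
  have key : ((P ×ˢ ((Finset.Icc (0:ℤ) (q-1)) ×ˢ (Finset.Icc (0:ℤ) (q-1)) ×ˢ
        (Finset.Icc (0:ℤ) (q-1))))).card
      = ((expChains q).filter (fun x => isCycle q x ∧ isFloorCycle q x)).card := by
    apply Finset.card_bij (fun (x : (ℤ × ℤ × ℤ × ℤ) × ℤ × ℤ × ℤ) (_ : x ∈ _) =>
      (2 * x.2.1 + x.1.1, 2 * x.2.2.1 + x.1.2.1, 2 * x.2.2.2 + x.1.2.2.1,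
        2 * ((x.2.2.1 + x.2.2.2 - x.2.1) % q) + x.1.2.2.2))
    · rintro ⟨⟨pa, pb, pc, pd⟩, a', b', c'⟩ hx
      simp only [Finset.mem_product, Finset.mem_Icc] at hx
      obtain ⟨hp, ha', hb', hc'⟩ := hx
      rw [memP] at hp
      simp only at hp
      set t := b' + c' - a' with ht
      have htm0 : 0 ≤ t % q := Int.emod_nonneg _ (by positivity)
      have htm1 : t % q < q := Int.emod_lt_of_pos _ hq0
      simp only [Finset.mem_filter, Finset.mem_product, Finset.mem_Icc, isCycle,
        isFloorCycle]
      refine ⟨⟨⟨by omega, by omega⟩, ⟨by omega, by omega⟩, ⟨by omega, by omega⟩,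
        ⟨by omega, by omega⟩⟩, ?_, ?_⟩
      · have h1 : 2 * a' + pa - (2 * b' + pb) - (2 * c' + pc) + (2 * (t % q) + pd)
            = (2 * q) * (-(t / q)) := by
          rw [Int.emod_def]
          have h9 := hp.2.2.2.2.2.2.2.2
          linear_combination h9
        rw [h1]; exact Int.mul_emod_right _ _
      · have e1 : (2 * a' + pa) / 2 = a' := by omega
        have e2 : (2 * b' + pb) / 2 = b' := by omega
        have e3 : (2 * c' + pc) / 2 = c' := by omega
        have e4 : (2 * (t % q) + pd) / 2 = t % q := by omega
        simp only [e1, e2, e3, e4]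
        have h1 : a' - b' - c' + t % q = q * (-(t / q)) := by
          rw [Int.emod_def]; ring
        rw [h1]; exact Int.mul_emod_right _ _
    · rintro ⟨⟨pa₁, pb₁, pc₁, pd₁⟩, a₁, b₁, c₁⟩ h₁ ⟨⟨pa₂, pb₂, pc₂, pd₂⟩, a₂, b₂, c₂⟩ h₂ he
      simp only [Finset.mem_product, Finset.mem_Icc] at h₁ h₂
      have hp₁ := (memP _).mp h₁.1
      have hp₂ := (memP _).mp h₂.1
      simp only at hp₁ hp₂
      simp only [Prod.mk.injEq] at he ⊢
      obtain ⟨e1, e2, e3, e4⟩ := he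
      have ha : a₁ = a₂ ∧ pa₁ = pa₂ := by omega
      have hb : b₁ = b₂ ∧ pb₁ = pb₂ := by omega
      have hc : c₁ = c₂ ∧ pc₁ = pc₂ := by omega
      have ht : (b₁ + c₁ - a₁) % q = (b₂ + c₂ - a₂) % q := by
        rw [ha.1, hb.1, hc.1]
      have hd : pd₁ = pd₂ := by omega
      exact ⟨⟨ha.2, hb.2, hc.2, hd⟩, ha.1, hb.1, hc.1⟩
    · rintro ⟨a, b, c, d⟩ hx
      simp only [Finset.mem_filter, Finset.mem_product, Finset.mem_Icc, isCycle,
        isFloorCycle] at hx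
      obtain ⟨⟨⟨ha0, ha1⟩, ⟨hb0, hb1⟩, ⟨hc0, hc1⟩, hd0, hd1⟩, hc1', hc2'⟩ := hx
      have hdvd1 : (2 * (q:ℤ)) ∣ (a - b - c + d) := Int.dvd_of_emod_eq_zero hc1'
      have hdvd2 : ((q:ℤ)) ∣ (a / 2 - b / 2 - c / 2 + d / 2) :=
        Int.dvd_of_emod_eq_zero hc2'
      have hdvd3 : (2 * (q:ℤ)) ∣ (a % 2 - b % 2 - c % 2 + d % 2) := by
        have h9 : a % 2 - b % 2 - c % 2 + d % 2
            = (a - b - c + d) - 2 * (a / 2 - b / 2 - c / 2 + d / 2) := by omega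
        rw [h9]
        exact dvd_sub hdvd1 (mul_dvd_mul_left 2 hdvd2)
      have hz : a % 2 - b % 2 - c % 2 + d % 2 = 0 := by
        apply Int.eq_zero_of_abs_lt_dvd hdvd3
        rw [abs_lt]
        constructor <;> omega
      refine ⟨((a % 2, b % 2, c % 2, d % 2), a / 2, b / 2, c / 2), ?_, ?_⟩
      · simp only [Finset.mem_product, Finset.mem_Icc]
        refine ⟨(memP _).mpr ?_, ⟨by omega, by omega⟩, ⟨by omega, by omega⟩,
          by omega, by omega⟩
        simp only
        refine ⟨by omega, by omega, by omega, by omega, by omega, by omega, by omega,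
          by omega, hz⟩
      · have hd2 : d / 2 = (b / 2 + c / 2 - a / 2) % q := by
          apply mod_unique (by omega) (by omega)
          have h9 : d / 2 - (b / 2 + c / 2 - a / 2)
              = a / 2 - b / 2 - c / 2 + d / 2 := by ring
          rw [h9]; exact hc2'
        simp only [Prod.mk.injEq]
        refine ⟨by omega, by omega, by omega, ?_⟩
        rw [← hd2]; omega
  rw [← key]
  simp only [Finset.card_product, Int.card_Icc]
  have h2 : (((q:ℤ) - 1 + 1 - 0).toNat) = q := by omega
  have h3 : P.card = 6 := by decide
  rw [h2, h3]; ring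

theorem stmt_0 (q : ℕ) (hq : 2 < q) :
    ((expChains q).filter (fun x => isCycle q x)).card = 8 * q ^ 3 ∧
    ((expChains q).filter (fun x => isCycle q x ∧ isFloorCycle q x)).card = 6 * q ^ 3 ∧
    (((expChains q).filter (fun x => isCycle q x ∧ isFloorCycle q x)).card : ℚ) /
      (((expChains q).filter (fun x => isCycle q x)).card : ℚ) = 3 / 4 := by
  have h1 := count1 q (by omega)
  have h2 := count2 q hq
  refine ⟨h1, h2, ?_⟩
  rw [h1, h2]
  have hq0 : ((q:ℚ)) ≠ 0 := by positivity
  push_cast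
  field_simp
  ring
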